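/- For all n ≥ 3, m_X(n,3) ≤ n^{n+1} · p_X(n,3), where m_X(n,3) is the number of rank-3 matroids on Fin n with no minor isomorphic to 𝒲³ or M(K₄), and p_X(n,3) is the number of rank-3 paving matroids on Fin n with no minor isomorphic to 𝒲³ or M(K₄). -/

import Mathlib

open Matroid Set Filter

namespace Paper

variable {α β : Type*}

/-- Deletion of a set from a matroid. -/
def Delete (M : Matroid α) (D : Set α) : Matroid α := M ↾ (M.E \ D)

/-- Contraction of a set in a matroid, defined via duality. -/
def Contract (M : Matroid α) (C : Set α) : Matroid α := (Delete M✶ C)✶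

/-- `N` is a minor of `M` if it is obtained from `M` by a contraction followed by a deletion. -/
def IsMinor (N M : Matroid α) : Prop := ∃ C D : Set α, N = Delete (Contract M C) D

/-- `M` is isomorphic to `N`. -/
def Iso (M : Matroid α) (N : Matroid β) : Prop :=
  ∃ (f : α → β) (hf : Set.InjOn f M.E), M.map f hf = N

/-- `M` has a minor isomorphic to `N`. -/
def HasIsoMinor (M : Matroid α) (N : Matroid β) : Prop :=
  ∃ M' : Matroid α, IsMinor M' M ∧ Iso M' N

/-- A circuit is a minimal dependent set. -/
def Circuit (M : Matroid α) (C : Set α) : Prop := M.Dep C ∧ ∀ D, D ⊂ C → M.Indep D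

/-- A hyperplane is a maximal proper flat. -/
def Hyperplane (M : Matroid α) (H : Set α) : Prop :=
  M.IsFlat H ∧ H ≠ M.E ∧ ∀ F, M.IsFlat F → H ⊂ F → F = M.E

/-- A matroid is sparse paving if every nonspanning circuit is a hyperplane. -/
def SparsePaving (M : Matroid α) : Prop :=
  ∀ C, Circuit M C → ¬ M.Spanning C → Hyperplane M C

/-- `M` has rank `r`: some base has exactly `r` elements. -/
def RankEq (M : Matroid α) (r : ℕ) : Prop := ∃ B, M.IsBase B ∧ B.ncard = r

/-- `N` is (isomorphic to) the rank-3 whirl `𝒲³`: the rank-3 sparse paving matroid on six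
elements whose 3-element circuits are exactly the three listed triples. -/
def IsWhirl3 (N : Matroid α) : Prop :=
  ∃ a : Fin 6 → α, Function.Injective a ∧ N.E = Set.range a ∧
    RankEq N 3 ∧ SparsePaving N ∧
    ∀ C : Set α, (Circuit N C ∧ C.ncard = 3) ↔
      (C = {a 0, a 1, a 2} ∨ C = {a 2, a 3, a 4} ∨ C = {a 4, a 5, a 0})

/-- `N` is (isomorphic to) `M(K₄)`: the rank-3 sparse paving matroid on six elements whose
3-element circuits are exactly the four listed triples. -/
def IsMK4 (N : Matroid α) : Prop :=
  ∃ a : Fin 6 → α, Function.Injective a ∧ N.E = Set.range a ∧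
    RankEq N 3 ∧ SparsePaving N ∧
    ∀ C : Set α, (Circuit N C ∧ C.ncard = 3) ↔
      (C = {a 0, a 1, a 2} ∨ C = {a 2, a 3, a 4} ∨ C = {a 4, a 5, a 0} ∨ C = {a 1, a 3, a 5})

/-- `M` has no minor isomorphic to `𝒲³` and no minor isomorphic to `M(K₄)`. -/
def WFree (M : Matroid α) : Prop :=
  (¬ ∃ N : Matroid α, IsMinor N M ∧ IsWhirl3 N) ∧
  (¬ ∃ N : Matroid α, IsMinor N M ∧ IsMK4 N)

end Paper

namespace Paper

/-- A rank-3 paving matroid: every circuit has 3 or 4 elements. -/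
def Paving3 (M : Matroid α) : Prop :=
  RankEq M 3 ∧ ∀ C, Circuit M C → C.ncard = 3 ∨ C.ncard = 4

end Paper


set_option linter.dupNamespace false
set_option linter.unnecessarySimpa false
set_option linter.unusedSectionVars false
open scoped Classical

namespace Paper

lemma delete_indep_iff {α : Type*} {M : Matroid α} {D I : Set α} :
    (Delete M D).Indep I ↔ M.Indep I ∧ I ⊆ M.E \ D := Matroid.restrict_indep_iff

lemma contract_empty {α : Type*} (M : Matroid α) : Contract M ∅ = M := by
  rw [Contract, Delete, diff_empty, Matroid.restrict_ground_eq_self, Matroid.dual_dual]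

variable {n : ℕ}

lemma indep_ncard_le_three {M : Matroid (Fin n)} (hrk : RankEq M 3) {I : Set (Fin n)}
    (hI : M.Indep I) : I.ncard ≤ 3 := by
  obtain ⟨B, hB, hIB⟩ := hI.exists_isBase_superset
  obtain ⟨B', hB', hB'3⟩ := hrk
  calc I.ncard ≤ B.ncard := Set.ncard_le_ncard hIB B.toFinite
    _ = B'.ncard := hB.ncard_eq_ncard_of_isBase hB'
    _ = 3 := hB'3

/-- The value (in ℕ) of the least nonloop parallel to `e`. -/
noncomputable def repN (M : Matroid (Fin n)) (e : Fin n) : ℕ :=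
  sInf {k : ℕ | ∃ f : Fin n, (f : ℕ) = k ∧ M.Indep {f} ∧ f ∈ M.closure {e}}

/-- The least nonloop parallel to `e`, as an element of `Fin n`. -/
noncomputable def repF (M : Matroid (Fin n)) (e : Fin n) : Fin n :=
  if h : repN M e < n then ⟨repN M e, h⟩ else e

/-- The set of representatives of parallel classes. -/
def Sset (M : Matroid (Fin n)) : Set (Fin n) := {e | M.Indep {e} ∧ repF M e = e}

/-- The encoding map recording loops and parallel-class representatives. -/
noncomputable def hmap (M : Matroid (Fin n)) (e : Fin n) : Fin (n + 1) :=
  if M.Indep {e} then (repF M e).castSucc else Fin.last n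

variable {M : Matroid (Fin n)} (hE : M.E = Set.univ)

section Rep
include hE

lemma repN_nonempty {e : Fin n} (he : M.Indep {e}) :
    {k : ℕ | ∃ f : Fin n, (f : ℕ) = k ∧ M.Indep {f} ∧ f ∈ M.closure {e}}.Nonempty :=
  ⟨e, e, rfl, he, M.subset_closure {e} (by simp [hE]) rfl⟩

lemma repF_spec {e : Fin n} (he : M.Indep {e}) :
    M.Indep {repF M e} ∧ repF M e ∈ M.closure {e} := by
  obtain ⟨f, hf, hfi, hfc⟩ := Nat.sInf_mem (repN_nonempty hE he)
  have hf' : f.val = repN M e := hf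
  have hlt : repN M e < n := hf' ▸ f.isLt
  have : repF M e = f := by
    rw [repF, dif_pos hlt]
    exact Fin.ext (by simp [hf'.symm])
  rw [this]; exact ⟨hfi, hfc⟩

lemma pair_dep_closure {e f : Fin n} (he : M.Indep {e}) (hne : e ≠ f)
    (hdep : ¬ M.Indep {e, f}) : f ∈ M.closure {e} := by
  rw [he.mem_closure_iff_of_notMem (by simp [hne.symm])]
  rw [Matroid.dep_iff, show (insert f {e} : Set (Fin n)) = {e, f} from Set.pair_comm f e]
  exact ⟨hdep, by simp [hE]⟩

lemma closure_eq_of_parallel {e f : Fin n} (he : M.Indep {e}) (hf : M.Indep {f})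
    (hfe : f ∈ M.closure {e}) : M.closure {f} = M.closure {e} := by
  have h1 : M.closure {f} ⊆ M.closure {e} :=
    M.closure_subset_closure_of_subset_closure (by simpa using hfe)
  have h2 : e ∈ M.closure {f} := by
    rcases eq_or_ne e f with rfl | hne
    · exact M.subset_closure {e} (by simp [hE]) rfl
    · have hdep : ¬ M.Indep {e, f} := by
        intro hind
        have : M.Dep (insert f {e}) := he.insert_dep_iff.2 ⟨hfe, by simp [hne.symm]⟩
        rw [show (insert f {e} : Set (Fin n)) = {e, f} from Set.pair_comm f e] at this
        exact this.not_indep hind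
      exact pair_dep_closure hE hf hne.symm (by rwa [Set.pair_comm])
  exact h1.antisymm (M.closure_subset_closure_of_subset_closure (by simpa using h2))

omit hE in
lemma repN_congr {e f : Fin n} (h : M.closure {e} = M.closure {f}) : repN M e = repN M f := by
  rw [repN, repN, h]

lemma repN_lt {e : Fin n} (he : M.Indep {e}) : repN M e < n := by
  obtain ⟨f, hf, _, _⟩ := Nat.sInf_mem (repN_nonempty hE he)
  exact (show f.val = repN M e from hf) ▸ f.isLt

lemma repF_val {e : Fin n} (he : M.Indep {e}) : (repF M e : ℕ) = repN M e := by
  rw [repF, dif_pos (repN_lt hE he)]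

lemma repF_closure {e : Fin n} (he : M.Indep {e}) :
    M.closure {repF M e} = M.closure {e} :=
  closure_eq_of_parallel hE he (repF_spec hE he).1 (repF_spec hE he).2

lemma repF_idem {e : Fin n} (he : M.Indep {e}) : repF M (repF M e) = repF M e := by
  apply Fin.ext
  rw [repF_val hE (repF_spec hE he).1, repF_val hE he]
  exact repN_congr (repF_closure hE he)

lemma repF_mem_Sset {e : Fin n} (he : M.Indep {e}) : repF M e ∈ Sset M :=
  ⟨(repF_spec hE he).1, repF_idem hE he⟩

lemma repF_eq_iff {e f : Fin n} (he : M.Indep {e}) (hf : M.Indep {f}) :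
    repF M e = repF M f ↔ M.closure {e} = M.closure {f} := by
  constructor
  · intro h
    rw [← repF_closure hE he, ← repF_closure hE hf, h]
  · intro h
    apply Fin.ext
    rw [repF_val hE he, repF_val hE hf]
    exact repN_congr h

lemma indep_pair_of_mem_Sset {e f : Fin n} (he : e ∈ Sset M) (hf : f ∈ Sset M) (hne : e ≠ f) :
    M.Indep {e, f} := by
  by_contra hdep
  have hfe : f ∈ M.closure {e} := pair_dep_closure hE he.1 hne hdep
  have := (repF_eq_iff hE hf.1 he.1).2 (closure_eq_of_parallel hE he.1 hf.1 hfe)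
  rw [hf.2, he.2] at this
  exact hne this.symm

lemma swap_indep {e f : Fin n} (hcl : M.closure {e} = M.closure {f}) {I : Set (Fin n)}
    (heI : e ∉ I) (hfI : f ∉ I) : M.Indep (insert e I) ↔ M.Indep (insert f I) := by
  by_cases hI : M.Indep I
  · rw [hI.insert_indep_iff_of_notMem heI, hI.insert_indep_iff_of_notMem hfI]
    have key : ∀ x y : Fin n, M.closure {x} = M.closure {y} → x ∈ M.closure I →
        y ∈ M.closure I := by
      intro x y hxy hx
      have : M.closure {x} ⊆ M.closure I :=
        M.closure_subset_closure_of_subset_closure (by simpa using hx)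
      exact this (hxy ▸ M.subset_closure {y} (by simp [hE]) rfl)
    constructor
    · intro h; exact ⟨by simp [hE], fun hc => h.2 (key f e hcl.symm hc)⟩
    · intro h; exact ⟨by simp [hE], fun hc => h.2 (key e f hcl hc)⟩
  · constructor <;> intro h <;> exact absurd (h.subset (subset_insert _ _)) hI

lemma subst_aux (I : Finset (Fin n)) : ∀ K : Set (Fin n),
    (∀ e ∈ I, M.Indep {e}) → Set.InjOn (repF M) I →
    (∀ e ∈ I, repF M e ∉ K) → (∀ e ∈ I, e ∉ K) →
    (M.Indep (↑I ∪ K) ↔ M.Indep (repF M '' ↑I ∪ K)) := by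
  induction I using Finset.induction_on with
  | empty => intro K _ _ _ _; simp
  | @insert a J haJ ih =>
    intro K hnl hinj hrK heK
    have haI : a ∈ insert a J := Finset.mem_insert_self a J
    have hanl : M.Indep {a} := hnl a haI
    have hra : repF M a ∉ (J : Set (Fin n)) := by
      intro hmem
      have hrJ : repF M a ∈ (insert a J : Finset (Fin n)) := Finset.mem_insert_of_mem hmem
      have h1 : repF M (repF M a) = repF M a := repF_idem hE hanl
      have h2 := hinj (by simpa using hrJ) (by simpa using haI) h1
      rw [h2] at hmem; exact haJ hmem
    have hstep : M.Indep (↑(insert a J) ∪ K) ↔ M.Indep (insert (repF M a) (↑J ∪ K)) := by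
      rw [Finset.coe_insert, Set.insert_union]
      exact swap_indep hE (repF_closure hE hanl).symm
        (by simp [haJ, heK a haI]) (by simp [hra, hrK a haI])
    rw [hstep, ← Set.union_insert]
    have hJn : ∀ e ∈ J, M.Indep {e} := fun e heJ => hnl e (Finset.mem_insert_of_mem heJ)
    have hJinj : Set.InjOn (repF M) J :=
      hinj.mono (by simp [Finset.coe_subset, Finset.subset_insert])
    have hJrK : ∀ e ∈ J, repF M e ∉ insert (repF M a) K := by
      intro e heJ hmem
      rcases hmem with hmem | hmem
      · have := hinj (by simpa using (Finset.mem_insert_of_mem heJ)) (by simpa using haI) hmem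
        rw [this] at heJ; exact haJ heJ
      · exact hrK e (Finset.mem_insert_of_mem heJ) hmem
    have hJeK : ∀ e ∈ J, e ∉ insert (repF M a) K := by
      intro e heJ hmem
      rcases hmem with hmem | hmem
      · have h1 : repF M e = repF M a := by
          rw [hmem]; exact repF_idem hE hanl
        have := hinj (by simpa using (Finset.mem_insert_of_mem heJ)) (by simpa using haI) h1
        rw [this] at heJ; exact haJ heJ
      · exact heK e (Finset.mem_insert_of_mem heJ) hmem
    rw [ih (insert (repF M a) K) hJn hJinj hJrK hJeK]
    rw [Set.union_insert, Finset.coe_insert, Set.image_insert_eq, Set.insert_union]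

lemma indep_char {I : Set (Fin n)} :
    M.Indep I ↔ (∀ e ∈ I, M.Indep {e}) ∧ Set.InjOn (repF M) I ∧ M.Indep (repF M '' I) := by
  have hIco : ((I.toFinset : Finset (Fin n)) : Set (Fin n)) = I := Set.coe_toFinset I
  constructor
  · intro hI
    have hnl : ∀ e ∈ I, M.Indep {e} := fun e he => hI.subset (by simpa using he)
    have hinj : Set.InjOn (repF M) I := by
      intro e he f hf hef
      by_contra hne
      have hcl := (repF_eq_iff hE (hnl e he) (hnl f hf)).1 hef
      have hfe : f ∈ M.closure {e} := hcl ▸ M.subset_closure {f} (by simp [hE]) rfl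
      have hdep : M.Dep (insert f {e}) :=
        ((hnl e he).insert_dep_iff).2 ⟨hfe, by simpa using fun h => hne h.symm⟩
      exact hdep.not_indep (hI.subset (by intro x hx; rcases hx with hx | hx <;> simp_all))
    have := subst_aux hE I.toFinset ∅ (by simpa [hIco] using hnl) (by rwa [hIco])
      (by simp) (by simp)
    rw [hIco, Set.union_empty, Set.union_empty] at this
    exact ⟨hnl, hinj, this.1 hI⟩
  · rintro ⟨hnl, hinj, hind⟩
    have := subst_aux hE I.toFinset ∅ (by simpa [hIco] using hnl) (by rwa [hIco])
      (by simp) (by simp)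
    rw [hIco, Set.union_empty, Set.union_empty] at this
    exact this.2 hind

end Rep

/-- The free extension: the matroid whose independent sets are the sets of size at most 3
whose trace on the representatives is independent. -/
noncomputable def PavExt (M : Matroid (Fin n)) : Matroid (Fin n) :=
  (IndepMatroid.ofFinite (Set.finite_univ (α := Fin n))
    (fun I => I.ncard ≤ 3 ∧ M.Indep (I ∩ Sset M))
    (by simp)
    (by
      rintro I J ⟨hJ3, hJi⟩ hIJ
      exact ⟨le_trans (Set.ncard_le_ncard hIJ J.toFinite) hJ3,
        hJi.subset (Set.inter_subset_inter_left _ hIJ)⟩)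
    (by
      rintro I J ⟨hI3, hIi⟩ ⟨hJ3, hJi⟩ hlt
      have hcard : ∀ e : Fin n, (insert e I).ncard ≤ 3 := by
        intro e
        calc (insert e I).ncard ≤ I.ncard + 1 := Set.ncard_insert_le e I
          _ ≤ 3 := by omega
      by_cases hsub : J \ I ⊆ Sset M
      · have hstrict : (I ∩ Sset M).ncard < (J ∩ Sset M).ncard := by
          by_contra hle
          push_neg at hle
          have h1 : J \ Sset M ⊆ I \ Sset M := by
            intro x hx
            rcases Classical.em (x ∈ I) with h | h
            · exact ⟨h, hx.2⟩
            · exact absurd (hsub ⟨hx.1, h⟩) hx.2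
          have h2 : (J \ Sset M).ncard ≤ (I \ Sset M).ncard :=
            Set.ncard_le_ncard h1 (I \ Sset M).toFinite
          have hIe : (I ∩ Sset M).ncard + (I \ Sset M).ncard = I.ncard :=
            Set.ncard_inter_add_ncard_diff_eq_ncard I (Sset M) I.toFinite
          have hJe : (J ∩ Sset M).ncard + (J \ Sset M).ncard = J.ncard :=
            Set.ncard_inter_add_ncard_diff_eq_ncard J (Sset M) J.toFinite
          omega
        obtain ⟨e, he, hei⟩ := hIi.augment hJi (by
          rw [← Set.Finite.cast_ncard_eq (I ∩ Sset M).toFinite,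
            ← Set.Finite.cast_ncard_eq (J ∩ Sset M).toFinite]
          exact_mod_cast hstrict)
        refine ⟨e, he.1.1, fun h => he.2 ⟨h, he.1.2⟩, hcard e, ?_⟩
        rw [Set.insert_inter_of_mem he.1.2]
        exact hei
      · rw [Set.not_subset] at hsub
        obtain ⟨e, heJI, heS⟩ := hsub
        refine ⟨e, heJI.1, heJI.2, hcard e, ?_⟩
        rw [Set.insert_inter_of_notMem heS]
        exact hIi)
    (fun I _ => Set.subset_univ I)).matroid

variable (M) in
lemma pavExt_ground : (PavExt M).E = Set.univ := rfl

variable (M) in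
lemma pavExt_indep_iff {I : Set (Fin n)} :
    (PavExt M).Indep I ↔ I.ncard ≤ 3 ∧ M.Indep (I ∩ Sset M) := by
  simp [PavExt]

variable {hrk : RankEq M 3}

lemma pavExt_loopless (M : Matroid (Fin n)) (x : Fin n) : (PavExt M).Indep {x} := by
  rw [pavExt_indep_iff]
  constructor
  · simp [Set.ncard_singleton]
  · by_cases hx : x ∈ Sset M
    · rw [Set.inter_eq_self_of_subset_left (by simpa using hx)]
      exact hx.1
    · rw [Set.singleton_inter_eq_empty.2 hx]
      exact M.empty_indep

lemma pavExt_rankEq (hrk : RankEq M 3) : RankEq (PavExt M) 3 := by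
  obtain ⟨B, hB, hB3⟩ := hrk
  refine ⟨B, ?_, hB3⟩
  have hBi : (PavExt M).Indep B := by
    rw [pavExt_indep_iff]
    exact ⟨le_of_eq hB3, (hB.indep.subset Set.inter_subset_left)⟩
  apply hBi.isBase_of_forall_insert
  intro e he hins
  rw [pavExt_indep_iff] at hins
  have : (insert e B).ncard = 4 := by
    rw [Set.ncard_insert_of_notMem he.2 B.toFinite, hB3]
  omega

lemma pavExt_indep_iff_of_subset_Sset (hrk : RankEq M 3) {X : Set (Fin n)} (hX : X ⊆ Sset M) :
    (PavExt M).Indep X ↔ M.Indep X := by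
  rw [pavExt_indep_iff, Set.inter_eq_self_of_subset_left hX]
  exact ⟨fun h => h.2, fun h => ⟨indep_ncard_le_three hrk h, h⟩⟩

include hE in
lemma indep_of_small_subset_Sset {X : Set (Fin n)} (hX : X ⊆ Sset M) (h2 : X.ncard ≤ 2) :
    M.Indep X := by
  interval_cases h : X.ncard
  · rw [(Set.ncard_eq_zero X.toFinite).1 h]
    exact M.empty_indep
  · obtain ⟨e, rfl⟩ := Set.ncard_eq_one.1 h
    exact (hX rfl).1
  · obtain ⟨e, f, hne, rfl⟩ := Set.ncard_eq_two.1 h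
    exact indep_pair_of_mem_Sset hE (hX (Set.mem_insert e {f}))
      (hX (Set.mem_insert_of_mem e rfl)) hne

lemma circuit_pavExt_subset_Sset {T : Set (Fin n)} (hT : Circuit (PavExt M) T)
    (hT3 : T.ncard = 3) : T ⊆ Sset M := by
  intro e heT
  by_contra heS
  have hss : T \ {e} ⊂ T := Set.sdiff_singleton_ssubset.2 heT
  have hind := hT.2 _ hss
  rw [pavExt_indep_iff] at hind
  have hTS : T ∩ Sset M = (T \ {e}) ∩ Sset M := by
    ext x
    simp only [Set.mem_inter_iff, Set.mem_diff, Set.mem_singleton_iff]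
    constructor
    · rintro ⟨hx, hxS⟩
      exact ⟨⟨hx, fun h => heS (h ▸ hxS)⟩, hxS⟩
    · rintro ⟨⟨hx, _⟩, hxS⟩
      exact ⟨hx, hxS⟩
  have hTi : (PavExt M).Indep T := by
    rw [pavExt_indep_iff]
    exact ⟨le_of_eq hT3, hTS ▸ hind.2⟩
  exact hT.1.not_indep hTi

include hE in
lemma pavExt_paving3 (hrk : RankEq M 3) : Paving3 (PavExt M) := by
  refine ⟨pavExt_rankEq hrk, fun C hC => ?_⟩
  have hdep := hC.1.not_indep
  rw [pavExt_indep_iff] at hdep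
  push_neg at hdep
  have h3 : 3 ≤ C.ncard := by
    by_contra hlt
    push_neg at hlt
    have hCS : M.Indep (C ∩ Sset M) :=
      indep_of_small_subset_Sset hE Set.inter_subset_right
        (le_trans (Set.ncard_le_ncard Set.inter_subset_left C.toFinite) (by omega))
    exact hdep (by omega) hCS
  have h4 : C.ncard ≤ 4 := by
    by_contra hgt
    push_neg at hgt
    obtain ⟨D, hDC, hD4⟩ := Set.exists_subset_card_eq (show 4 ≤ C.ncard by omega)
    have hss : D ⊂ C := Set.ssubset_iff_subset_ne.2 ⟨hDC, fun h => by rw [h] at hD4; omega⟩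
    have := hC.2 D hss
    rw [pavExt_indep_iff] at this
    omega
  omega

lemma pavExt_restrict_eq (hrk : RankEq M 3) {R : Set (Fin n)} (hR : R ⊆ Sset M) :
    (PavExt M) ↾ R = M ↾ R := by
  apply Matroid.ext_indep (by simp)
  intro I hI
  simp only [Matroid.restrict_ground_eq] at hI
  rw [Matroid.restrict_indep_iff, Matroid.restrict_indep_iff,
    pavExt_indep_iff_of_subset_Sset hrk (hI.trans hR)]

section ContractLemma

variable {P : Matroid (Fin n)}

lemma contract_indep_structure {C I : Set (Fin n)} (hPE : P.E = Set.univ)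
    (hI : (Contract P C).Indep I) :
    I ⊆ Set.univ \ C ∧ ∃ B : Set (Fin n), P✶.IsBasis B (Set.univ \ C) ∧ Disjoint I B := by
  rw [Contract, Delete, Matroid.dual_indep_iff_exists'] at hI
  obtain ⟨hIsub, B, hB, hdisj⟩ := hI
  have hG : (P✶ ↾ (P✶.E \ C)).E = Set.univ \ C := by
    rw [Matroid.restrict_ground_eq, Matroid.dual_ground, hPE]
  rw [hG] at hIsub
  have hsubE : Set.univ \ C ⊆ P✶.E := by rw [Matroid.dual_ground, hPE]; exact Set.diff_subset
  rw [show P✶.E \ C = Set.univ \ C by rw [Matroid.dual_ground, hPE]] at hB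
  rw [Matroid.isBase_restrict_iff hsubE] at hB
  exact ⟨hIsub, B, hB, hdisj⟩

/-- If a rank-3 matroid admits a contraction minor with an independent 3-set, the contracted set
must be disjoint from the ground set. -/
lemma contract_eq_ground_of_indep_three {C I : Set (Fin n)} (hPE : P.E = Set.univ)
    (hloop : ∀ x : Fin n, P.Indep {x}) (hrk : RankEq P 3)
    (hI : (Contract P C).Indep I) (hI3 : I.ncard = 3) : C = ∅ := by
  obtain ⟨hIsub, B, hB, hdisj⟩ := contract_indep_structure hPE hI
  -- every base of P disjoint from B contains (univ \ C) \ B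
  have hkey : ∀ B' : Set (Fin n), P.IsBase B' → Disjoint B' B → (Set.univ \ C) \ B ⊆ B' := by
    intro B' hB' hd y hy
    by_contra hyB'
    have hindep : P✶.Indep (insert y B) := by
      rw [Matroid.dual_indep_iff_exists']
      refine ⟨by rw [hPE]; exact Set.subset_univ _, B', hB', ?_⟩
      rw [Set.insert_eq, Set.disjoint_union_left, Set.disjoint_singleton_left]
      exact ⟨hyB', hd.symm⟩
    exact (hB.insert_dep ⟨hy.1, hy.2⟩).not_indep hindep
  -- B is coindependent: some base of P is disjoint from B
  obtain ⟨B₀, hB₀, hB₀d⟩ : ∃ B₀, P.IsBase B₀ ∧ Disjoint B B₀ := by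
    have := hB.indep
    rw [Matroid.dual_indep_iff_exists'] at this
    exact this.2
  obtain ⟨Br, hBr, hBr3⟩ := hrk
  have hcard : ∀ B' : Set (Fin n), P.IsBase B' → B'.ncard = 3 := fun B' hB' =>
    (hB'.ncard_eq_ncard_of_isBase hBr).trans hBr3
  have hIB₀ : I ⊆ B₀ := (Set.subset_diff.2 ⟨hIsub, hdisj⟩).trans (hkey B₀ hB₀ hB₀d.symm)
  have hIeq : I = B₀ := Set.eq_of_subset_of_ncard_le hIB₀ (by rw [hI3, hcard B₀ hB₀]) B₀.toFinite
  have hIbase : P.IsBase I := hIeq ▸ hB₀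
  have hIdB : Disjoint I B := hdisj
  -- conclude C = ∅
  rw [Set.eq_empty_iff_forall_notMem]
  intro x hxC
  -- every base disjoint from B equals I
  have huniq : ∀ B' : Set (Fin n), P.IsBase B' → Disjoint B' B → B' = I := by
    intro B' hB' hd
    have h1 : I ⊆ B' := (Set.subset_diff.2 ⟨hIsub, hdisj⟩).trans (hkey B' hB' hd)
    exact (Set.eq_of_subset_of_ncard_le h1 (by rw [hI3, hcard B' hB']) B'.toFinite).symm
  -- descent: find a base containing x disjoint from B
  have hdescent : ∀ k : ℕ, ∀ B' : Set (Fin n), P.IsBase B' → x ∈ B' → (B' ∩ B).ncard ≤ k → False := by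
    intro k
    induction k with
    | zero =>
      intro B' hB' hx h0
      have hBd : Disjoint B' B := by
        rw [Set.disjoint_iff_inter_eq_empty]
        exact (Set.ncard_eq_zero (B' ∩ B).toFinite).1 (le_antisymm h0 (Nat.zero_le _))
      have := huniq B' hB' hBd
      rw [this] at hx
      exact (hIsub hx).2 hxC
    | succ k ih =>
      intro B' hB' hx hk
      by_cases h0 : (B' ∩ B).ncard = 0
      · exact ih B' hB' hx (by omega)
      obtain ⟨b, hb⟩ := Set.nonempty_of_ncard_ne_zero h0
      have hbI : b ∉ I := fun hbi => (hIdB.ne_of_mem hbi hb.2) rfl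
      obtain ⟨f, hf, hBase2⟩ := hB'.exchange hIbase ⟨hb.1, hbI⟩
      have hfB : f ∉ B := fun hfb => (hIdB.ne_of_mem hf.1 hfb) rfl
      have hxb : x ≠ b := by
        intro h
        have : b ∈ Set.univ \ C := hB.subset hb.2
        exact this.2 (h ▸ hxC)
      have hx2 : x ∈ insert f (B' \ {b}) := Set.mem_insert_of_mem _ ⟨hx, hxb⟩
      have hint : insert f (B' \ {b}) ∩ B = (B' ∩ B) \ {b} := by
        ext z
        simp only [Set.mem_inter_iff, Set.mem_insert_iff, Set.mem_diff, Set.mem_singleton_iff]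
        constructor
        · rintro ⟨hz | ⟨hz1, hz2⟩, hzB⟩
          · exact absurd (hz ▸ hzB) hfB
          · exact ⟨⟨hz1, hzB⟩, hz2⟩
        · rintro ⟨⟨hz1, hzB⟩, hz2⟩
          exact ⟨Or.inr ⟨hz1, hz2⟩, hzB⟩
      apply ih _ hBase2 hx2
      rw [hint, Set.ncard_diff_singleton_of_mem hb]
      omega
  obtain ⟨B₁, hB₁, hxB₁⟩ := (hloop x).exists_isBase_superset
  exact hdescent ((B₁ ∩ B).ncard) B₁ hB₁ (hxB₁ rfl) le_rfl

end ContractLemma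

section MinorTransfer

lemma circuit_of_restrict {α : Type*} {Q : Matroid α} {R T : Set α} (hR : R ⊆ Q.E)
    (hT : Circuit (Q ↾ R) T) : Circuit Q T := by
  obtain ⟨hdep, hmin⟩ := hT
  have hTR : T ⊆ R := hdep.subset_ground.trans (by rw [Matroid.restrict_ground_eq])
  constructor
  · rw [Matroid.dep_iff]
    refine ⟨fun hi => hdep.not_indep ?_, hTR.trans hR⟩
    rw [Matroid.restrict_indep_iff]
    exact ⟨hi, hTR⟩
  · intro D hD
    have := hmin D hD
    rw [Matroid.restrict_indep_iff] at this
    exact this.1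

lemma minor_pavExt_to_minor {M N : Matroid (Fin n)} (hE : M.E = Set.univ) (hrk : RankEq M 3)
    (hmin : IsMinor N (PavExt M)) (a : Fin 6 → Fin n) (hNE : N.E = Set.range a)
    (hNrk : RankEq N 3)
    (hcov : ∀ i : Fin 6, ∃ T, Circuit N T ∧ T.ncard = 3 ∧ a i ∈ T) :
    IsMinor N M := by
  obtain ⟨C, D, hNdef⟩ := hmin
  obtain ⟨I, hIb, hI3⟩ := hNrk
  have hIi : (Contract (PavExt M) C).Indep I := by
    have h := hIb.indep
    rw [hNdef, delete_indep_iff] at h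
    exact h.1
  have hC : C = ∅ := contract_eq_ground_of_indep_three (pavExt_ground M)
    (pavExt_loopless M) (pavExt_rankEq hrk) hIi hI3
  rw [hC, contract_empty] at hNdef
  have hND : N = (PavExt M) ↾ (Set.univ \ D) := by
    rw [hNdef, Delete, pavExt_ground]
  have hrange : Set.univ \ D = Set.range a := by
    rw [← hNE, hND, Matroid.restrict_ground_eq]
  have hsub : Set.range a ⊆ Sset M := by
    rintro x ⟨i, rfl⟩
    obtain ⟨T, hT, hT3, haT⟩ := hcov i
    have hTP : Circuit (PavExt M) T := by
      apply circuit_of_restrict (Q := PavExt M) (R := Set.univ \ D)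
        (by rw [pavExt_ground]; exact Set.diff_subset)
      rwa [← hND]
    exact circuit_pavExt_subset_Sset hTP hT3 haT
  have hNM : N = M ↾ Set.range a := by
    rw [hND, hrange, pavExt_restrict_eq hrk hsub]
  refine ⟨∅, Set.univ \ Set.range a, ?_⟩
  rw [contract_empty, Delete, hE, Set.diff_diff_cancel_left (Set.subset_univ _)]
  exact hNM

lemma wfree_pavExt {M : Matroid (Fin n)} (hE : M.E = Set.univ) (hrk : RankEq M 3)
    (hfree : WFree M) : WFree (PavExt M) := by
  constructor
  · rintro ⟨N, hmin, hW⟩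
    obtain ⟨a, hainj, hNE, hNrk, hsp, hcirc⟩ := hW
    have hcov : ∀ i : Fin 6, ∃ T, Circuit N T ∧ T.ncard = 3 ∧ a i ∈ T := by
      intro i
      fin_cases i
      · exact ⟨_, ((hcirc _).2 (Or.inl rfl)).1, ((hcirc _).2 (Or.inl rfl)).2, by simp⟩
      · exact ⟨_, ((hcirc _).2 (Or.inl rfl)).1, ((hcirc _).2 (Or.inl rfl)).2, by simp⟩
      · exact ⟨_, ((hcirc _).2 (Or.inl rfl)).1, ((hcirc _).2 (Or.inl rfl)).2, by simp⟩
      · exact ⟨_, ((hcirc _).2 (Or.inr (Or.inl rfl))).1,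
          ((hcirc _).2 (Or.inr (Or.inl rfl))).2, by simp⟩
      · exact ⟨_, ((hcirc _).2 (Or.inr (Or.inl rfl))).1,
          ((hcirc _).2 (Or.inr (Or.inl rfl))).2, by simp⟩
      · exact ⟨_, ((hcirc _).2 (Or.inr (Or.inr rfl))).1,
          ((hcirc _).2 (Or.inr (Or.inr rfl))).2, by simp⟩
    exact hfree.1 ⟨N, minor_pavExt_to_minor hE hrk hmin a hNE hNrk hcov,
      ⟨a, hainj, hNE, hNrk, hsp, hcirc⟩⟩
  · rintro ⟨N, hmin, hW⟩
    obtain ⟨a, hainj, hNE, hNrk, hsp, hcirc⟩ := hW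
    have hcov : ∀ i : Fin 6, ∃ T, Circuit N T ∧ T.ncard = 3 ∧ a i ∈ T := by
      intro i
      fin_cases i
      · exact ⟨_, ((hcirc _).2 (Or.inl rfl)).1, ((hcirc _).2 (Or.inl rfl)).2, by simp⟩
      · exact ⟨_, ((hcirc _).2 (Or.inl rfl)).1, ((hcirc _).2 (Or.inl rfl)).2, by simp⟩
      · exact ⟨_, ((hcirc _).2 (Or.inl rfl)).1, ((hcirc _).2 (Or.inl rfl)).2, by simp⟩
      · exact ⟨_, ((hcirc _).2 (Or.inr (Or.inl rfl))).1,
          ((hcirc _).2 (Or.inr (Or.inl rfl))).2, by simp⟩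
      · exact ⟨_, ((hcirc _).2 (Or.inr (Or.inl rfl))).1,
          ((hcirc _).2 (Or.inr (Or.inl rfl))).2, by simp⟩
      · exact ⟨_, ((hcirc _).2 (Or.inr (Or.inr (Or.inl rfl)))).1,
          ((hcirc _).2 (Or.inr (Or.inr (Or.inl rfl)))).2, by simp⟩
    exact hfree.2 ⟨N, minor_pavExt_to_minor hE hrk hmin a hNE hNrk hcov,
      ⟨a, hainj, hNE, hNrk, hsp, hcirc⟩⟩

end MinorTransfer

section Encode

variable {M : Matroid (Fin n)}

lemma hmap_eq_last_iff (hE : M.E = Set.univ) (e : Fin n) :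
    hmap M e = Fin.last n ↔ ¬ M.Indep {e} := by
  rw [hmap]
  by_cases he : M.Indep {e}
  · rw [if_pos he]
    simp only [he, not_true_eq_false, iff_false]
    exact (Fin.castSucc_lt_last _).ne
  · rw [if_neg he]
    simp [he]

lemma eq_of_encode {M₁ M₂ : Matroid (Fin n)} (hE₁ : M₁.E = Set.univ) (hE₂ : M₂.E = Set.univ)
    (hrk₁ : RankEq M₁ 3) (hrk₂ : RankEq M₂ 3) (hh : hmap M₁ = hmap M₂)
    (hP : PavExt M₁ = PavExt M₂) : M₁ = M₂ := by
  have hloop : ∀ e : Fin n, M₁.Indep {e} ↔ M₂.Indep {e} := by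
    intro e
    rw [← not_iff_not, ← hmap_eq_last_iff hE₁ e, ← hmap_eq_last_iff hE₂ e, hh]
  have hrep : ∀ e : Fin n, M₁.Indep {e} → repF M₁ e = repF M₂ e := by
    intro e he₁
    have he₂ : M₂.Indep {e} := (hloop e).1 he₁
    have := congrFun hh e
    rw [hmap, hmap, if_pos he₁, if_pos he₂] at this
    exact Fin.castSucc_injective n this
  have hS : Sset M₁ = Sset M₂ := by
    ext e
    constructor
    · rintro ⟨hi, hr⟩
      exact ⟨(hloop e).1 hi, (hrep e hi).symm.trans hr⟩
    · rintro ⟨hi, hr⟩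
      exact ⟨(hloop e).2 hi, (hrep e ((hloop e).2 hi)).trans hr⟩
  apply Matroid.ext_indep (hE₁.trans hE₂.symm)
  intro I _
  rw [indep_char hE₁, indep_char hE₂]
  by_cases hnl : ∀ e ∈ I, M₁.Indep {e}
  · have hnl₂ : ∀ e ∈ I, M₂.Indep {e} := fun e he => (hloop e).1 (hnl e he)
    have hag : ∀ e ∈ I, repF M₁ e = repF M₂ e := fun e he => hrep e (hnl e he)
    have himg : repF M₁ '' I = repF M₂ '' I := by
      apply Set.image_congr hag
    have hinj_iff : Set.InjOn (repF M₁) I ↔ Set.InjOn (repF M₂) I := by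
      constructor
      · intro h x hx y hy hxy
        exact h hx hy (by rw [hag x hx, hag y hy]; exact hxy)
      · intro h x hx y hy hxy
        exact h hx hy (by rw [← hag x hx, ← hag y hy]; exact hxy)
    have hJ₁ : repF M₁ '' I ⊆ Sset M₁ := by
      rintro x ⟨e, he, rfl⟩
      exact repF_mem_Sset hE₁ (hnl e he)
    have hJ₂ : repF M₂ '' I ⊆ Sset M₂ := by
      rintro x ⟨e, he, rfl⟩
      exact repF_mem_Sset hE₂ (hnl₂ e he)
    have hind_iff : M₁.Indep (repF M₁ '' I) ↔ M₂.Indep (repF M₂ '' I) := by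
      rw [← pavExt_indep_iff_of_subset_Sset hrk₁ hJ₁,
        ← pavExt_indep_iff_of_subset_Sset hrk₂ hJ₂, hP, himg]
    constructor
    · rintro ⟨_, h2, h3⟩
      exact ⟨hnl₂, hinj_iff.1 h2, hind_iff.1 h3⟩
    · rintro ⟨_, h2, h3⟩
      exact ⟨hnl, hinj_iff.2 h2, hind_iff.2 h3⟩
  · constructor
    · rintro ⟨h1, _, _⟩
      exact absurd h1 hnl
    · rintro ⟨h1, _, _⟩
      exact absurd (fun e he => (hloop e).2 (h1 e he)) hnl

end Encode

section Count

lemma matroid_finite : Finite (Matroid (Fin n)) := by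
  apply Finite.of_injective (fun M : Matroid (Fin n) => (M.E, M.Indep))
  intro M₁ M₂ h
  rw [Prod.mk.injEq] at h
  exact Matroid.ext_indep h.1 (by intro I _; rw [h.2])

lemma succ_pow_le {m : ℕ} (hm : 3 ≤ m) : (m + 1) ^ m ≤ m ^ (m + 1) := by
  induction m, hm using Nat.le_induction with
  | base => norm_num
  | succ m hm ih =>
    have hpos : 0 < (m + 1) ^ m := Nat.pow_pos (by omega)
    apply Nat.le_of_mul_le_mul_right (c := (m + 1) ^ m) _ hpos
    calc (m + 1 + 1) ^ (m + 1) * (m + 1) ^ m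
        ≤ (m + 1 + 1) ^ (m + 1) * m ^ (m + 1) := Nat.mul_le_mul_left _ ih
      _ = ((m + 1 + 1) * m) ^ (m + 1) := by rw [← mul_pow]
      _ ≤ ((m + 1) * (m + 1)) ^ (m + 1) := Nat.pow_le_pow_left (by nlinarith) _
      _ = (m + 1) ^ (m + 1) * (m + 1) ^ (m + 1) := by rw [mul_pow]
      _ = (m + 1) ^ ((m + 1) + (m + 1)) := by rw [← pow_add]
      _ = (m + 1) ^ (m + 1 + 1 + m) := by congr 1; omega
      _ = (m + 1) ^ (m + 1 + 1) * (m + 1) ^ m := by rw [← pow_add]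

end Count

end Paper

namespace Paper

/-- For `n ≥ 3`, `m_X(n,3) ≤ n^{n+1} · p_X(n,3)`: the number of rank-3 `{𝒲³, M(K₄)}`-free
matroids on `Fin n` is at most `n^{n+1}` times the number of rank-3 `{𝒲³, M(K₄)}`-free paving
matroids on `Fin n`. -/
theorem rank3_count_le_paving_count (n : ℕ) (hn : 3 ≤ n) :
    Set.ncard {M : Matroid (Fin n) | M.E = Set.univ ∧ RankEq M 3 ∧ WFree M} ≤
      n ^ (n + 1) *
        Set.ncard {M : Matroid (Fin n) | M.E = Set.univ ∧ Paving3 M ∧ WFree M} := by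
  classical
  haveI : Finite (Matroid (Fin n)) := matroid_finite
  set A := {M : Matroid (Fin n) | M.E = Set.univ ∧ RankEq M 3 ∧ WFree M} with hA
  set B := {M : Matroid (Fin n) | M.E = Set.univ ∧ Paving3 M ∧ WFree M} with hB
  have hmem : ∀ M ∈ A, PavExt M ∈ B := by
    rintro M ⟨hE, hrk, hfree⟩
    exact ⟨pavExt_ground M, pavExt_paving3 hE hrk, wfree_pavExt hE hrk hfree⟩
  let F : A → (Fin n → Fin (n + 1)) × B := fun M => (hmap M.1, ⟨PavExt M.1, hmem M.1 M.2⟩)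
  have hinj : Function.Injective F := by
    rintro ⟨M₁, h₁⟩ ⟨M₂, h₂⟩ h
    rw [Prod.mk.injEq, Subtype.mk.injEq] at h
    exact Subtype.ext (eq_of_encode h₁.1 h₂.1 h₁.2.1 h₂.2.1 h.1 h.2)
  have hcard : Nat.card A ≤ Nat.card ((Fin n → Fin (n + 1)) × B) :=
    Nat.card_le_card_of_injective F hinj
  rw [Nat.card_prod, Nat.card_fun, Nat.card_eq_fintype_card (α := Fin (n + 1)),
    Nat.card_eq_fintype_card (α := Fin n), Fintype.card_fin, Fintype.card_fin] at hcard
  rw [← Nat.card_coe_set_eq, ← Nat.card_coe_set_eq]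
  calc Nat.card A ≤ (n + 1) ^ n * Nat.card B := hcard
    _ ≤ n ^ (n + 1) * Nat.card B := Nat.mul_le_mul_right _ (succ_pow_le hn)

end Paper
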